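/- If u is harmonic on the punctured disk D₁∖{0} ⊂ ℝ² = ℂ, then u(z) = Re(h(z)) + c·log|z| for some holomorphic function h on D₁∖{0} and some real constant c. -/

import Mathlib

open Metric Complex Set intervalIntegral

noncomputable section Stmt17Aux

namespace Stmt17

/-- The left half plane. -/
def H : Set ℂ := {w : ℂ | w.re < 0}

lemma isOpen_H : IsOpen H := isOpen_lt Complex.continuous_re continuous_const

lemma convex_H : Convex ℝ H := convex_halfSpace_re_lt 0

lemma mem_H {w : ℂ} : w ∈ H ↔ w.re < 0 := Iff.rfl

variable {f : ℂ → ℂ} (hf : DifferentiableOn ℂ f H)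

/-- "primitive" of `f` based at `-1`. -/
def prim (f : ℂ → ℂ) (w : ℂ) : ℂ :=
  (∫ t : ℝ in (-1 : ℝ)..w.re, f t) + I • ∫ t : ℝ in (0 : ℝ)..w.im, f (w.re + t * I)

lemma horiz_intble (hf : DifferentiableOn ℂ f H) {a b y : ℝ} (ha : a < 0) (hb : b < 0) :
    IntervalIntegrable (fun t : ℝ => f (t + y * I)) MeasureTheory.volume a b := by
  apply ContinuousOn.intervalIntegrable
  apply (hf.continuousOn.comp (Continuous.continuousOn (by continuity)))
  intro t ht
  simp only [mem_H, Set.mem_setOf_eq, Complex.add_re, Complex.ofReal_re, Complex.mul_re,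
    Complex.I_re, Complex.I_im, Complex.ofReal_im]
  have h1 : t ≤ max a b := by
    rcases Set.mem_uIcc.mp ht with h | h
    · exact h.2.trans (le_max_right a b)
    · exact h.2.trans (le_max_left a b)
  calc t + (y * 0 - 0 * 1) = t := by ring
    _ ≤ max a b := h1
    _ < 0 := max_lt ha hb

lemma vert_intble (hf : DifferentiableOn ℂ f H) {x a b : ℝ} (hx : x < 0) :
    IntervalIntegrable (fun t : ℝ => f (x + t * I)) MeasureTheory.volume a b := by
  apply ContinuousOn.intervalIntegrable
  apply (hf.continuousOn.comp (Continuous.continuousOn (by continuity)))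
  intro t _
  simpa [mem_H] using hx


lemma uIcc_neg {a b : ℝ} (ha : a < 0) (hb : b < 0) : Set.uIcc a b ⊆ Set.Iio 0 := by
  intro t ht
  rcases Set.mem_uIcc.mp ht with h | h
  · exact lt_of_le_of_lt h.2 hb
  · exact lt_of_le_of_lt h.2 ha

lemma rect (hf : DifferentiableOn ℂ f H) {z w : ℂ} (hz : z.re < 0) (hw : w.re < 0) :
    (∫ x : ℝ in z.re..w.re, f (x + z.im * I)) - (∫ x : ℝ in z.re..w.re, f (x + w.im * I)) +
      I • (∫ y : ℝ in z.im..w.im, f (w.re + y * I)) -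
      I • (∫ y : ℝ in z.im..w.im, f (z.re + y * I)) = 0 := by
  apply Complex.integral_boundary_rect_eq_zero_of_differentiableOn f z w
  apply hf.mono
  intro p hp
  rw [Complex.mem_reProdIm] at hp
  exact uIcc_neg hz hw hp.1

/-- Difference formula for the primitive: L-shaped path from `z` to `w`. -/
lemma prim_sub (hf : DifferentiableOn ℂ f H) {z w : ℂ} (hz : z ∈ H) (hw : w ∈ H) :
    prim f w - prim f z =
      (∫ t : ℝ in z.re..w.re, f (t + z.im * I)) + I • ∫ t : ℝ in z.im..w.im, f (w.re + t * I) := by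
  have hz' : z.re < 0 := hz
  have hw' : w.re < 0 := hw
  have h1 : (∫ t : ℝ in (-1 : ℝ)..w.re, f t) - (∫ t : ℝ in (-1 : ℝ)..z.re, f t)
      = ∫ t : ℝ in z.re..w.re, f t := by
    apply intervalIntegral.integral_interval_sub_left
    · simpa using horiz_intble hf (by norm_num) hw' (y := 0)
    · simpa using horiz_intble hf (by norm_num) hz' (y := 0)
  -- rectangle with corners (z.re, 0) and (w.re, z.im)
  have h2 := rect hf (z := (z.re : ℂ)) (w := (w.re : ℂ) + z.im * I) (by simpa using hz') (by simpa using hw')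
  norm_num at h2
  -- h2 : (∫ x in z.re..w.re, f ↑x) - (∫ x in z.re..w.re, f (↑x + ↑z.im*I))
  --      + I • ∫ y in 0..z.im, f (↑w.re + ↑y*I) - I • ∫ y in 0..z.im, f (↑z.re + ↑y*I) = 0
  have h3 : (∫ t : ℝ in (0 : ℝ)..w.im, f (w.re + t * I)) - (∫ t : ℝ in (0 : ℝ)..z.im, f (w.re + t * I))
      = ∫ t : ℝ in z.im..w.im, f (w.re + t * I) :=
    intervalIntegral.integral_interval_sub_left (vert_intble hf hw') (vert_intble hf hw')
  simp only [prim, smul_eq_mul] at h2 h3 ⊢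
  linear_combination h1 + h2 + I * h3


lemma abs_horiz (w : ℂ) (t : ℝ) : ‖(t : ℂ) + w.im * I - w‖ = |t - w.re| := by
  have : (t : ℂ) + w.im * I - w = ((t - w.re : ℝ) : ℂ) := by
    apply Complex.ext <;> simp
  rw [this, Complex.norm_real, Real.norm_eq_abs]

lemma abs_vert (x : ℂ) (s t : ℝ) : ‖(x.re : ℂ) + t * I - (x.re + s * I)‖ = |t - s| := by
  have : (x.re : ℂ) + t * I - (x.re + s * I) = ((t - s : ℝ) : ℂ) * I := by
    apply Complex.ext <;> simp
  rw [this, norm_mul, Complex.norm_I, mul_one, Complex.norm_real, Real.norm_eq_abs]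

theorem hasDerivAt_prim (hf : DifferentiableOn ℂ f H) {w : ℂ} (hw : w ∈ H) :
    HasDerivAt (prim f) (f w) w := by
  rw [hasDerivAt_iff_isLittleO, Asymptotics.isLittleO_iff]
  intro ε hε
  have hε2 : 0 < ε / 4 := by positivity
  -- continuity of f at w
  have hfc : ContinuousAt f w := (hf.continuousOn.continuousAt (isOpen_H.mem_nhds hw))
  rcases Metric.continuousAt_iff.mp hfc (ε / 4) hε2 with ⟨δ₀, hδ₀, hball⟩
  rcases Metric.mem_nhds_iff.mp (isOpen_H.mem_nhds hw) with ⟨δ₁, hδ₁, hsub⟩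
  set δ := min δ₀ δ₁ with hδdef
  have hδ : 0 < δ := lt_min hδ₀ hδ₁
  have key : ∀ v : ℂ, ‖v - w‖ < δ → ‖f v - f w‖ ≤ ε / 4 := by
    intro v hv
    simpa [dist_eq_norm] using (hball (show dist v w < δ₀ by simpa [Complex.dist_eq] using hv.trans_le (min_le_left _ _))).le
  filter_upwards [Metric.ball_mem_nhds w (show 0 < δ / 3 by positivity)] with w' hw'
  have hd : ‖w' - w‖ < δ / 3 := by simpa [Complex.dist_eq] using hw'
  have hw'H : w' ∈ H := hsub (Metric.ball_subset_ball (by linarith [min_le_right δ₀ δ₁]) hw')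
  -- the difference formula
  have hdiff := prim_sub hf hw hw'H
  -- bounds on the two legs
  have hre : |w'.re - w.re| ≤ ‖w' - w‖ := by
    simpa using Complex.abs_re_le_norm (w' - w)
  have him : |w'.im - w.im| ≤ ‖w' - w‖ := by
    simpa using Complex.abs_im_le_norm (w' - w)
  -- horizontal integrand bound
  have hint1 : IntervalIntegrable (fun t : ℝ => f (t + w.im * I) - f w) MeasureTheory.volume w.re w'.re := by
    apply IntervalIntegrable.sub _ intervalIntegrable_const
    exact horiz_intble hf hw hw'H
  have hint2 : IntervalIntegrable (fun t : ℝ => f (w'.re + t * I) - f w) MeasureTheory.volume w.im w'.im := by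
    apply IntervalIntegrable.sub _ intervalIntegrable_const
    exact vert_intble hf hw'H
  have e1 : ∫ t : ℝ in w.re..w'.re, (f (t + w.im * I) - f w)
      = (∫ t : ℝ in w.re..w'.re, f (t + w.im * I)) - (w'.re - w.re) • f w := by
    rw [intervalIntegral.integral_sub (horiz_intble hf hw hw'H) intervalIntegrable_const,
      intervalIntegral.integral_const]
  have e2 : ∫ t : ℝ in w.im..w'.im, (f (w'.re + t * I) - f w)
      = (∫ t : ℝ in w.im..w'.im, f (w'.re + t * I)) - (w'.im - w.im) • f w := by
    rw [intervalIntegral.integral_sub (vert_intble hf hw'H) intervalIntegrable_const,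
      intervalIntegral.integral_const]
  have hsplit : prim f w' - prim f w - (w' - w) • f w
      = (∫ t : ℝ in w.re..w'.re, (f (t + w.im * I) - f w))
        + I • ∫ t : ℝ in w.im..w'.im, (f (w'.re + t * I) - f w) := by
    rw [e1, e2, hdiff]
    have : w' - w = ((w'.re - w.re : ℝ) : ℂ) + ((w'.im - w.im : ℝ) : ℂ) * I := by
      apply Complex.ext <;> simp
    rw [this]
    simp only [smul_eq_mul, real_smul]
    push_cast
    ring
  have b1 : ‖∫ t : ℝ in w.re..w'.re, (f (t + w.im * I) - f w)‖ ≤ ε / 4 * |w'.re - w.re| := by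
    apply intervalIntegral.norm_integral_le_of_norm_le_const
    intro t ht
    apply key
    have htm : |t - w.re| ≤ |w'.re - w.re| := by
      rcases Set.mem_uIoc.mp ht with h | h
      · rw [_root_.abs_of_nonneg (by linarith [h.1]), _root_.abs_of_nonneg (by linarith [h.1, h.2])]
        linarith [h.2]
      · rw [_root_.abs_of_nonpos (by linarith [h.2]), _root_.abs_of_nonpos (by linarith [h.1, h.2])]
        linarith [h.1]
    calc ‖(t : ℂ) + w.im * I - w‖ = |t - w.re| := abs_horiz w t
      _ ≤ |w'.re - w.re| := htm
      _ ≤ ‖w' - w‖ := hre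
      _ < δ := by linarith
  have b2 : ‖∫ t : ℝ in w.im..w'.im, (f (w'.re + t * I) - f w)‖ ≤ ε / 4 * |w'.im - w.im| := by
    apply intervalIntegral.norm_integral_le_of_norm_le_const
    intro t ht
    apply key
    have htm : |t - w.im| ≤ |w'.im - w.im| := by
      rcases Set.mem_uIoc.mp ht with h | h
      · rw [_root_.abs_of_nonneg (by linarith [h.1]), _root_.abs_of_nonneg (by linarith [h.1, h.2])]
        linarith [h.2]
      · rw [_root_.abs_of_nonpos (by linarith [h.2]), _root_.abs_of_nonpos (by linarith [h.1, h.2])]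
        linarith [h.1]
    have split : (w'.re : ℂ) + t * I - w = ((w'.re : ℂ) + t * I - (w'.re + w.im * I)) + ((w'.re : ℂ) + w.im * I - w) := by ring
    calc ‖(w'.re : ℂ) + t * I - w‖
        ≤ ‖(w'.re : ℂ) + t * I - (w'.re + w.im * I)‖ + ‖(w'.re : ℂ) + w.im * I - w‖ := by
          rw [split]; exact norm_add_le _ _
      _ = |t - w.im| + |w'.re - w.re| := by
          rw [abs_horiz w w'.re]
          congr 1
          have : (w'.re : ℂ) + t * I - (w'.re + w.im * I) = ((w'.re + t * I) - ((w'.re : ℂ) + w.im * I)) := by ring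
          rw [this]
          simpa using abs_vert w' w.im t
      _ ≤ |w'.im - w.im| + |w'.re - w.re| := by linarith
      _ ≤ ‖w' - w‖ + ‖w' - w‖ := by linarith
      _ < δ := by linarith
  calc ‖prim f w' - prim f w - (w' - w) • f w‖
      ≤ ‖∫ t : ℝ in w.re..w'.re, (f (t + w.im * I) - f w)‖
        + ‖I • ∫ t : ℝ in w.im..w'.im, (f (w'.re + t * I) - f w)‖ := by
        rw [hsplit]; exact norm_add_le _ _
    _ ≤ ε / 4 * |w'.re - w.re| + ε / 4 * |w'.im - w.im| := by
        rw [norm_smul]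
        simpa [Complex.norm_I] using add_le_add b1 b2
    _ ≤ ε / 4 * ‖w' - w‖ + ε / 4 * ‖w' - w‖ := by
        have := hε2.le
        gcongr
    _ ≤ ε * ‖w' - w‖ := by
        nlinarith [norm_nonneg (w' - w)]



lemma clm_line (L : ℂ →L[ℝ] ℝ) (v : ℂ) : L v = v.re * L 1 + v.im * L I := by
  have hv : v = v.re • (1 : ℂ) + v.im • I := by
    apply Complex.ext <;> simp
  calc L v = L (v.re • (1 : ℂ) + v.im • I) := by rw [← hv]
    _ = v.re * L 1 + v.im * L I := by
        rw [map_add, map_smul, map_smul]; simp [smul_eq_mul]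

lemma clm_lineC (L : ℂ →L[ℝ] ℂ) (v : ℂ) : L v = v.re • L 1 + v.im • L I := by
  have hv : v = v.re • (1 : ℂ) + v.im • I := by
    apply Complex.ext <;> simp
  calc L v = L (v.re • (1 : ℂ) + v.im • I) := by rw [← hv]
    _ = v.re • L 1 + v.im • L I := by rw [map_add, map_smul, map_smul]

lemma hasFDerivAt_unrestrict {f : ℂ → ℂ} {M : ℂ →L[ℂ] ℂ} {x : ℂ}
    (h : HasFDerivAt f (M.restrictScalars ℝ) x) : HasFDerivAt f M x := by
  rw [hasFDerivAt_iff_isLittleO_nhds_zero] at h ⊢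
  exact h

/-- The set on which everything happens. -/
def S : Set ℂ := ball (0 : ℂ) 1 \ {0}

lemma isOpen_S : IsOpen S := isOpen_ball.sdiff isClosed_singleton

lemma mem_S {z : ℂ} : z ∈ S ↔ ‖z‖ < 1 ∧ z ≠ 0 := by
  simp [S, Complex.dist_eq]

variable (u : ℂ → ℝ)

/-- `F = ∂u/∂x - i ∂u/∂y`. -/
def Fz (z : ℂ) : ℂ := ((fderiv ℝ u z 1 : ℝ) : ℂ) - ((fderiv ℝ u z I : ℝ) : ℂ) * I

variable {u}

lemma Fz_mul_re (z v : ℂ) : (Fz u z * v).re = fderiv ℝ u z v := by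
  rw [clm_line (fderiv ℝ u z) v]
  simp only [Fz, Complex.mul_re, Complex.sub_re, Complex.sub_im, Complex.ofReal_re,
    Complex.ofReal_im, Complex.mul_im, Complex.I_re, Complex.I_im]
  ring

section CR
variable (hu : ContDiffOn ℝ 2 u S)
  (hharm : ∀ z ∈ S, fderiv ℝ (fun w => fderiv ℝ u w 1) z 1
        + fderiv ℝ (fun w => fderiv ℝ u w Complex.I) z Complex.I = 0)

include hu hharm in
theorem Fz_holo : ∀ z ∈ S, DifferentiableAt ℂ (Fz u) z := by
  intro z hz
  have hmem : S ∈ nhds z := isOpen_S.mem_nhds hz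
  have hC : ContDiffAt ℝ 2 u z := (hu z hz).contDiffAt hmem
  have h1 : ContDiffAt ℝ 1 (fderiv ℝ u) z := hC.fderiv_right (by norm_num)
  have hB : DifferentiableAt ℝ (fderiv ℝ u) z := h1.differentiableAt (by norm_num)
  set B := fderiv ℝ (fderiv ℝ u) z with hBdef
  have hBat : HasFDerivAt (fderiv ℝ u) B z := hB.hasFDerivAt
  -- derivatives of directional derivatives
  have hev : ∀ e : ℂ, HasFDerivAt (fun w => fderiv ℝ u w e)
      ((ContinuousLinearMap.apply ℝ ℝ e).comp B) z := by
    intro e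
    exact (ContinuousLinearMap.apply ℝ ℝ e).hasFDerivAt.comp z hBat
  -- symmetry of second derivative
  have hsym : B I 1 = B 1 I := (hC.isSymmSndFDerivAt (by simp)) I 1
  -- Laplace equation
  have hlap : B 1 1 + B I I = 0 := by
    have e1 := (hev 1).fderiv
    have e2 := (hev I).fderiv
    have := hharm z hz
    rw [e1, e2] at this
    simpa using this
  -- real differentiability of Fz
  have hF1 : HasFDerivAt (fun w => ((fderiv ℝ u w 1 : ℝ) : ℂ))
      (Complex.ofRealCLM.comp ((ContinuousLinearMap.apply ℝ ℝ (1:ℂ)).comp B)) z :=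
    Complex.ofRealCLM.hasFDerivAt.comp z (hev 1)
  have hFI : HasFDerivAt (fun w => ((fderiv ℝ u w I : ℝ) : ℂ) * I)
      (I • (Complex.ofRealCLM.comp ((ContinuousLinearMap.apply ℝ ℝ (I:ℂ)).comp B))) z := by
    have := (Complex.ofRealCLM.hasFDerivAt.comp z (hev I)).mul_const I
    exact this
  have hF : HasFDerivAt (Fz u)
      ((Complex.ofRealCLM.comp ((ContinuousLinearMap.apply ℝ ℝ (1:ℂ)).comp B))
        - I • (Complex.ofRealCLM.comp ((ContinuousLinearMap.apply ℝ ℝ (I:ℂ)).comp B))) z :=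
    hF1.sub hFI
  set L := (Complex.ofRealCLM.comp ((ContinuousLinearMap.apply ℝ ℝ (1:ℂ)).comp B))
        - I • (Complex.ofRealCLM.comp ((ContinuousLinearMap.apply ℝ ℝ (I:ℂ)).comp B)) with hLdef
  have hLv : ∀ v : ℂ, L v = ((B v 1 : ℝ) : ℂ) - I * ((B v I : ℝ) : ℂ) := by
    intro v
    simp [hLdef, smul_eq_mul]
  -- Cauchy-Riemann
  have hCR : L I = I * L 1 := by
    rw [hLv, hLv]
    have hII : B I I = -(B 1 1) := by linarith
    rw [hsym, hII]
    push_cast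
    linear_combination ((B 1 I : ℝ) : ℂ) * Complex.I_sq
  -- conclude complex differentiability
  set M : ℂ →L[ℂ] ℂ := ContinuousLinearMap.smulRight (1 : ℂ →L[ℂ] ℂ) (L 1) with hMdef
  have hML : M.restrictScalars ℝ = L := by
    ext1 v
    rw [clm_lineC L v]
    simp only [hMdef, ContinuousLinearMap.coe_restrictScalars',
      ContinuousLinearMap.smulRight_apply, ContinuousLinearMap.one_apply]
    rw [hCR]
    simp only [smul_eq_mul, Complex.real_smul]
    linear_combination (-(L 1)) * (Complex.re_add_im v)
  have : HasFDerivAt (Fz u) M z := hasFDerivAt_unrestrict (by rw [hML]; exact hF)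
  exact this.differentiableAt

end CR

section Construction
variable {g : ℂ → ℂ} (hg : DifferentiableOn ℂ g S)

/-- `2πi`. -/
def T : ℂ := 2 * (Real.pi : ℝ) * I

lemma T_re : T.re = 0 := by simp [T]

lemma exp_T (w : ℂ) : Complex.exp (w + T) = Complex.exp w := Complex.exp_periodic w

lemma exp_mem_S {w : ℂ} (hw : w ∈ H) : Complex.exp w ∈ S := by
  rw [mem_S]
  refine ⟨?_, Complex.exp_ne_zero w⟩
  rw [Complex.norm_exp]
  exact Real.exp_lt_one_iff.mpr hw

lemma log_mem_H {z : ℂ} (hz : z ∈ S) : Complex.log z ∈ H := by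
  rw [mem_S] at hz
  rw [mem_H, Complex.log_re]
  exact Real.log_neg (norm_pos_iff.mpr hz.2) hz.1

/-- the pulled-back function on the half plane. -/
def phi (g : ℂ → ℂ) (w : ℂ) : ℂ := g (Complex.exp w) * Complex.exp w

include hg in
lemma phi_diff : DifferentiableOn ℂ (phi g) H := by
  intro w hw
  apply DifferentiableAt.differentiableWithinAt
  have h1 : DifferentiableAt ℂ g (Complex.exp w) :=
    (hg (Complex.exp w) (exp_mem_S hw)).differentiableAt (isOpen_S.mem_nhds (exp_mem_S hw))
  exact (h1.comp w (Complex.differentiable_exp w)).mul (Complex.differentiable_exp w)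

lemma phi_T (w : ℂ) : phi g (w + T) = phi g w := by rw [phi, exp_T, ← phi]

/-- the period of the primitive of `phi g`. -/
def PP (g : ℂ → ℂ) : ℂ := prim (phi g) (-1 + T) - prim (phi g) (-1)

lemma neg_one_mem_H : (-1 : ℂ) ∈ H := by simp [mem_H]

include hg in
lemma prim_shift {w : ℂ} (hw : w ∈ H) :
    prim (phi g) (w + T) = prim (phi g) w + PP g := by
  have hT : ∀ v : ℂ, v ∈ H → v + T ∈ H := by
    intro v hv
    simpa [mem_H, T_re] using hv
  set D : ℂ → ℂ := fun v => prim (phi g) (v + T) - prim (phi g) v with hD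
  have hder : ∀ v ∈ H, HasDerivAt D 0 v := by
    intro v hv
    have h1 : HasDerivAt (fun v => prim (phi g) (v + T)) (phi g (v + T)) v := by
      have := (hasDerivAt_prim (phi_diff hg) (hT v hv)).comp v ((hasDerivAt_id v).add_const T)
      simp at this; exact this
    have h2 := hasDerivAt_prim (phi_diff hg) hv
    have := h1.sub h2
    rw [phi_T] at this
    simp at this; exact this
  have hdiffOn : DifferentiableOn ℂ D H := fun v hv =>
    ((hder v hv).differentiableAt).differentiableWithinAt
  have hconst : D w = D (-1) := by
    apply convex_H.is_const_of_fderivWithin_eq_zero hdiffOn _ hw neg_one_mem_H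
    intro v hv
    rw [fderivWithin_of_isOpen isOpen_H hv, ((hder v hv).hasFDerivAt).fderiv]
    ext1
    simp
  have : D w = PP g := by rw [hconst]; rfl
  rw [← this]
  simp [hD]

lemma mem_H_add_mul_T {a v : ℂ} (ha : a.im = 0) (hv : v ∈ H) : v + a * T ∈ H := by
  have h0 : (a * T).re = 0 := by
    rw [Complex.mul_re, T_re, ha]
    simp [T]
  simp only [mem_H, Complex.add_re, h0, add_zero]
  exact hv

include hg in
lemma prim_shift_int (n : ℤ) {w : ℂ} (hw : w ∈ H) :
    prim (phi g) (w + n * T) = prim (phi g) w + n * PP g := by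
  induction n using Int.induction_on with
  | zero => simp
  | succ k ih =>
    push_cast at ih ⊢
    have hk : w + (k : ℂ) * T ∈ H := mem_H_add_mul_T (by simp) hw
    rw [show w + ((k : ℂ) + 1) * T = (w + (k : ℂ) * T) + T by ring, prim_shift hg hk, ih]
    ring
  | pred k ih =>
    push_cast at ih ⊢
    have hk : w + (-(k : ℂ) - 1) * T ∈ H := mem_H_add_mul_T (by simp) hw
    have e : w + (-(k : ℂ)) * T = (w + (-(k : ℂ) - 1) * T) + T := by ring
    rw [e, prim_shift hg hk] at ih
    linear_combination ih

lemma T_ne_zero : T ≠ 0 := by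
  simp [T, Complex.ext_iff, Real.pi_ne_zero]

/-- the (possibly complex) residue coefficient. -/
def cC (g : ℂ → ℂ) : ℂ := PP g / T

lemma cC_mul_T : cC g * T = PP g := div_mul_cancel₀ _ T_ne_zero

/-- the primitive with the logarithmic part removed. -/
def Psi (g : ℂ → ℂ) (w : ℂ) : ℂ := prim (phi g) w - cC g * w

include hg in
lemma Psi_congr {l₁ l₂ : ℂ} (h₁ : l₁ ∈ H) (h₂ : l₂ ∈ H) (he : Complex.exp l₁ = Complex.exp l₂) :
    Psi g l₁ = Psi g l₂ := by
  obtain ⟨n, hn⟩ := Complex.exp_eq_exp_iff_exists_int.mp he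
  have hn' : l₁ = l₂ + n * T := by rw [T]; exact hn
  rw [Psi, Psi, hn', prim_shift_int hg n h₂]
  have := cC_mul_T (g := g)
  linear_combination (-(n : ℂ)) * this

include hg in
lemma hasDerivAt_Psi {w : ℂ} (hw : w ∈ H) :
    HasDerivAt (Psi g) (phi g w - cC g) w := by
  have h1 := hasDerivAt_prim (phi_diff hg) hw
  have h2 : HasDerivAt (fun w : ℂ => cC g * w) (cC g) w := by
    simpa using (hasDerivAt_id w).const_mul (cC g)
  exact h1.sub h2

/-- the holomorphic function whose real part is `u` minus the log part (up to constant). -/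
def h0 (g : ℂ → ℂ) (z : ℂ) : ℂ := Psi g (Complex.log z)

include hg in
theorem hasDerivAt_h0 {z : ℂ} (hz : z ∈ S) :
    HasDerivAt (h0 g) (g z - cC g / z) z := by
  have hz' := mem_S.mp hz
  have hz0 : z ≠ 0 := hz'.2
  have hlogH : Complex.log z ∈ H := log_mem_H hz
  have key : ∀ l : ℂ, l ∈ H → Complex.exp l = z →
      (phi g l - cC g) * z⁻¹ = g z - cC g / z := by
    intro l hl he
    rw [phi, he]
    field_simp
  by_cases hslit : z ∈ Complex.slitPlane
  · have hlog := Complex.hasDerivAt_log hslit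
    have hΨ := hasDerivAt_Psi hg hlogH
    have := hΨ.comp z hlog
    have heq : (phi g (Complex.log z) - cC g) * z⁻¹ = g z - cC g / z :=
      key _ hlogH (Complex.exp_log hz0)
    rw [heq] at this
    exact this
  · -- z is on the negative real axis
    have hzim : z.im = 0 ∧ z.re ≤ 0 := by
      rw [Complex.mem_slitPlane_iff] at hslit
      push_neg at hslit
      exact ⟨hslit.2, hslit.1⟩
    have hzre : z.re < 0 := by
      rcases lt_or_eq_of_le hzim.2 with h | h
      · exact h
      · exact absurd (Complex.ext (by simpa using h) (by simpa using hzim.1)) hz0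
    have hnegslit : -z ∈ Complex.slitPlane := by
      rw [Complex.mem_slitPlane_iff]
      left
      simpa using hzre
    have hexp2 : Complex.exp (Complex.log (-z) + Real.pi * I) = z := by
      rw [Complex.exp_add, Complex.exp_log (neg_ne_zero.mpr hz0), Complex.exp_pi_mul_I]
      ring
    have hmem2 : Complex.log (-z) + Real.pi * I ∈ H := by
      rw [mem_H]
      simp only [Complex.add_re, Complex.log_re, norm_neg]
      have : ((Real.pi : ℂ) * I).re = 0 := by simp
      rw [this, add_zero]
      exact Real.log_neg (norm_pos_iff.mpr hz0) hz'.1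
    -- the alternative representation
    have heqv : h0 g =ᶠ[nhds z] fun w => Psi g (Complex.log (-w) + Real.pi * I) := by
      filter_upwards [isOpen_S.mem_nhds hz] with w hwS
      have hw' := mem_S.mp hwS
      apply Psi_congr hg (log_mem_H hwS)
      · rw [mem_H]
        simp only [Complex.add_re, Complex.log_re, norm_neg]
        have : ((Real.pi : ℂ) * I).re = 0 := by simp
        rw [this, add_zero]
        exact Real.log_neg (norm_pos_iff.mpr hw'.2) hw'.1
      · rw [Complex.exp_log hw'.2, Complex.exp_add,
          Complex.exp_log (neg_ne_zero.mpr hw'.2), Complex.exp_pi_mul_I]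
        ring
    have hlogneg : HasDerivAt (fun w : ℂ => Complex.log (-w) + Real.pi * I)
        ((-z)⁻¹ * (-1)) z := by
      have h1 : HasDerivAt (fun w : ℂ => -w) (-1) z := (hasDerivAt_id z).neg
      exact ((Complex.hasDerivAt_log hnegslit).comp z h1).add_const _
    have hΨ := (hasDerivAt_Psi hg hmem2).comp z hlogneg
    have hval : (phi g (Complex.log (-z) + Real.pi * I) - cC g) * ((-z)⁻¹ * (-1))
        = g z - cC g / z := by
      rw [show ((-z)⁻¹ * (-1) : ℂ) = z⁻¹ by field_simp]
      exact key _ hmem2 hexp2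
    rw [hval] at hΨ
    exact hΨ.congr_of_eventuallyEq heqv

end Construction

section Realness
variable {u : ℂ → ℝ} (hu : ContDiffOn ℝ 2 u S)

lemma Fz_mul_im (z v : ℂ) : fderiv ℝ u z (v * I) = -((Fz u z * v).im) := by
  rw [clm_line (fderiv ℝ u z) (v * I)]
  simp only [Fz, Complex.mul_re, Complex.mul_im, Complex.I_re, Complex.I_im,
    Complex.sub_re, Complex.sub_im, Complex.ofReal_re, Complex.ofReal_im]
  ring

include hu in
lemma gamma_hasDerivAt (t : ℝ) :
    HasDerivAt (fun s : ℝ => u (Complex.exp (-1 + s * I)))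
      (-((phi (Fz u) ((-1 : ℂ) + t * I)).im)) t := by
  have hmemH : ((-1 : ℂ) + t * I) ∈ H := by simp [mem_H]
  have hzS : Complex.exp ((-1 : ℂ) + t * I) ∈ S := exp_mem_S hmemH
  set z := Complex.exp ((-1 : ℂ) + t * I) with hzdef
  have hγ : HasDerivAt (fun s : ℝ => Complex.exp (-1 + s * I)) (z * I) t := by
    have h1 : HasDerivAt (fun s : ℝ => ((s : ℂ) * I)) I t := by
      have := (Complex.ofRealCLM.hasDerivAt (x := t)).mul_const I
      simpa using this
    have h2 : HasDerivAt (fun s : ℝ => ((-1 : ℂ) + s * I)) I t := h1.const_add _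
    simpa [hzdef] using h2.cexp
  have hdu : HasFDerivAt u (fderiv ℝ u z) z :=
    (((hu z hzS).contDiffAt (isOpen_S.mem_nhds hzS)).differentiableAt (by norm_num)).hasFDerivAt
  have := hdu.comp_hasDerivAt t hγ
  have heq : fderiv ℝ u z (z * I) = -((phi (Fz u) ((-1 : ℂ) + t * I)).im) := by
    rw [Fz_mul_im, phi, ← hzdef]
  rw [heq] at this
  exact this

variable (hharm : ∀ z ∈ S, fderiv ℝ (fun w => fderiv ℝ u w 1) z 1
        + fderiv ℝ (fun w => fderiv ℝ u w Complex.I) z Complex.I = 0)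

include hu hharm in
lemma Fz_diffOn : DifferentiableOn ℂ (Fz u) S :=
  fun z hz => (Fz_holo hu hharm z hz).differentiableWithinAt

include hu hharm in
lemma phi_cont : Continuous (fun t : ℝ => phi (Fz u) ((-1 : ℂ) + t * I)) := by
  apply ContinuousOn.comp_continuous
    ((phi_diff (Fz_diffOn hu hharm)).continuousOn) (by continuity)
  intro t
  simp [mem_H]

include hu hharm in
lemma PP_re_zero : (PP (Fz u)).re = 0 := by
  have hg := Fz_diffOn hu hharm
  have hprim1 : prim (phi (Fz u)) (-1 : ℂ) = 0 := by
    simp [prim]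
  have hre : ((-1 : ℂ) + T).re = -1 := by simp [T]
  have him : ((-1 : ℂ) + T).im = 2 * Real.pi := by simp [T]
  have hprim2 : prim (phi (Fz u)) ((-1 : ℂ) + T)
      = I • ∫ t : ℝ in (0 : ℝ)..(2 * Real.pi), phi (Fz u) ((-1 : ℝ) + t * I) := by
    rw [prim, hre, him]
    norm_num
  have hPP : PP (Fz u) = I • ∫ t : ℝ in (0 : ℝ)..(2 * Real.pi), phi (Fz u) ((-1 : ℝ) + t * I) := by
    rw [PP, hprim1, hprim2, sub_zero]
  have hintble : IntervalIntegrable (fun t : ℝ => phi (Fz u) ((-1 : ℂ) + t * I))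
      MeasureTheory.volume 0 (2 * Real.pi) := (phi_cont hu hharm).intervalIntegrable _ _
  have hIm : (∫ t : ℝ in (0 : ℝ)..(2 * Real.pi), phi (Fz u) ((-1 : ℂ) + t * I)).im
      = ∫ t : ℝ in (0 : ℝ)..(2 * Real.pi), (phi (Fz u) ((-1 : ℂ) + t * I)).im := by
    exact (Complex.imCLM.intervalIntegral_comp_comm hintble).symm
  have hcont : Continuous (fun t : ℝ => -((phi (Fz u) ((-1 : ℂ) + t * I)).im)) :=
    (Complex.continuous_im.comp (phi_cont hu hharm)).neg
  have hFTC := intervalIntegral.integral_eq_sub_of_hasDerivAt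
    (a := (0 : ℝ)) (b := 2 * Real.pi)
    (f := fun s : ℝ => u (Complex.exp (-1 + s * I)))
    (f' := fun t : ℝ => -((phi (Fz u) ((-1 : ℂ) + t * I)).im))
    (fun t _ => gamma_hasDerivAt hu t) (hcont.intervalIntegrable _ _)
  have hexp : Complex.exp ((-1 : ℂ) + ((2 * Real.pi : ℝ) : ℂ) * I) = Complex.exp ((-1 : ℂ) + ((0 : ℝ) : ℂ) * I) := by
    have e : ((-1 : ℂ) + ((2 * Real.pi : ℝ) : ℂ) * I) = (-1 : ℂ) + T := by
      rw [T]; push_cast; ring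
    rw [e, exp_T]
    norm_num
  have hzero : ∫ t : ℝ in (0 : ℝ)..(2 * Real.pi), -((phi (Fz u) ((-1 : ℂ) + t * I)).im) = 0 := by
    rw [hFTC]
    rw [hexp, sub_self]
  have hzero' : ∫ t : ℝ in (0 : ℝ)..(2 * Real.pi), ((phi (Fz u) ((-1 : ℂ) + t * I)).im) = 0 := by
    rw [intervalIntegral.integral_neg] at hzero
    linarith
  rw [hPP]
  have : (I • (∫ t : ℝ in (0 : ℝ)..(2 * Real.pi), phi (Fz u) ((-1 : ℝ) + t * I))).re
      = -((∫ t : ℝ in (0 : ℝ)..(2 * Real.pi), phi (Fz u) ((-1 : ℝ) + t * I)).im) := by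
    rw [smul_eq_mul, Complex.mul_re]
    simp
  rw [this]
  have hcoe : (∫ t : ℝ in (0 : ℝ)..(2 * Real.pi), phi (Fz u) (((-1 : ℝ) : ℂ) + t * I))
      = ∫ t : ℝ in (0 : ℝ)..(2 * Real.pi), phi (Fz u) ((-1 : ℂ) + t * I) := by
    norm_num
  rw [hcoe, hIm, hzero', neg_zero]

end Realness

section Final
variable {u : ℂ → ℝ} (hu : ContDiffOn ℝ 2 u S)
  (hharm : ∀ z ∈ S, fderiv ℝ (fun w => fderiv ℝ u w 1) z 1
        + fderiv ℝ (fun w => fderiv ℝ u w Complex.I) z Complex.I = 0)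

/-- the real constant `c`. -/
def cR (u : ℂ → ℝ) : ℝ := (PP (Fz u)).im / (2 * Real.pi)

include hu hharm in
lemma cC_eq : cC (Fz u) = ((cR u : ℝ) : ℂ) := by
  rw [cC, eq_comm, eq_div_iff T_ne_zero]
  apply Complex.ext
  · rw [PP_re_zero hu hharm]
    simp [T, Complex.mul_re]
  · simp only [T, Complex.mul_im, Complex.ofReal_re, Complex.ofReal_im, cR]
    simp [Complex.mul_im, Complex.mul_re]

lemma hasFDerivAt_logAbs {z : ℂ} (hz : z ≠ 0) :
    ∃ L : ℂ →L[ℝ] ℝ, HasFDerivAt (fun w : ℂ => Real.log (‖w‖)) L z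
      ∧ ∀ v : ℂ, L v = (z.re * v.re + z.im * v.im) / Complex.normSq z := by
  have hre : HasFDerivAt (fun w : ℂ => w.re * w.re)
      (z.re • Complex.reCLM + z.re • Complex.reCLM) z :=
    Complex.reCLM.hasFDerivAt.mul Complex.reCLM.hasFDerivAt
  have him : HasFDerivAt (fun w : ℂ => w.im * w.im)
      (z.im • Complex.imCLM + z.im • Complex.imCLM) z :=
    Complex.imCLM.hasFDerivAt.mul Complex.imCLM.hasFDerivAt
  have hnsq : HasFDerivAt (fun w : ℂ => Complex.normSq w)
      ((z.re • Complex.reCLM + z.re • Complex.reCLM) + (z.im • Complex.imCLM + z.im • Complex.imCLM)) z := by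
    have h := hre.add him
    have e : (fun w : ℂ => w.re * w.re + w.im * w.im) = fun w : ℂ => Complex.normSq w :=
      funext fun w => (Complex.normSq_apply w).symm
    rw [← e]; exact h
  have hnsq0 : Complex.normSq z ≠ 0 := by
    simpa [Complex.normSq_eq_zero] using hz
  have hlog : HasDerivAt Real.log (Complex.normSq z)⁻¹ (Complex.normSq z) :=
    Real.hasDerivAt_log hnsq0
  have hcomp := hlog.comp_hasFDerivAt z hnsq
  simp only [Function.comp_def] at hcomp
  have hhalf := hcomp.const_mul ((1 : ℝ)/2) (𝔸 := ℝ)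
  have hfun : (fun w : ℂ => (1:ℝ)/2 * Real.log (Complex.normSq w))
      = fun w : ℂ => Real.log (‖w‖) := by
    funext w
    rw [Complex.normSq_eq_norm_sq, Real.log_pow]
    push_cast
    ring
  rw [hfun] at hhalf
  refine ⟨_, hhalf, ?_⟩
  intro v
  simp only [ContinuousLinearMap.smul_apply, ContinuousLinearMap.add_apply,
    ContinuousLinearMap.coe_smul', Pi.smul_apply, Complex.reCLM_apply, Complex.imCLM_apply,
    smul_eq_mul]
  field_simp
  ring

include hu hharm in
theorem main : ∃ (h : ℂ → ℂ) (c : ℝ), DifferentiableOn ℂ h S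
    ∧ ∀ z ∈ S, u z = (h z).re + c * Real.log (‖z‖) := by
  have hg : DifferentiableOn ℂ (Fz u) S := Fz_diffOn hu hharm
  set c := cR u with hc
  set ψ : ℂ → ℝ := fun z => u z - (h0 (Fz u) z).re - c * Real.log (‖z‖) with hψ
  -- ψ has zero derivative on S
  have hψ0 : ∀ z ∈ S, HasFDerivAt ψ (0 : ℂ →L[ℝ] ℝ) z := by
    intro z hz
    have hz0 : z ≠ 0 := (mem_S.mp hz).2
    have hd0 := hasDerivAt_h0 hg hz
    rw [cC_eq hu hharm] at hd0
    set k : ℂ := Fz u z - ((c : ℝ) : ℂ) / z with hk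
    have hre : HasFDerivAt (fun w => (h0 (Fz u) w).re)
        (Complex.reCLM.comp ((ContinuousLinearMap.smulRight (1 : ℂ →L[ℂ] ℂ) k).restrictScalars ℝ)) z :=
      Complex.reCLM.hasFDerivAt.comp z (hd0.hasFDerivAt.restrictScalars ℝ)
    obtain ⟨L, hL, hLv⟩ := hasFDerivAt_logAbs hz0
    have hu' : HasFDerivAt u (fderiv ℝ u z) z :=
      (((hu z hz).contDiffAt (isOpen_S.mem_nhds hz)).differentiableAt (by norm_num)).hasFDerivAt
    have htot : HasFDerivAt ψ
        (fderiv ℝ u z - Complex.reCLM.comp ((ContinuousLinearMap.smulRight (1 : ℂ →L[ℂ] ℂ) k).restrictScalars ℝ)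
          - c • L) z :=
      (hu'.sub hre).sub (hL.const_mul c)
    have hzero : fderiv ℝ u z - Complex.reCLM.comp ((ContinuousLinearMap.smulRight (1 : ℂ →L[ℂ] ℂ) k).restrictScalars ℝ)
          - c • L = 0 := by
      ext1 v
      simp only [ContinuousLinearMap.sub_apply, ContinuousLinearMap.smul_apply,
        ContinuousLinearMap.coe_comp', Function.comp_apply,
        ContinuousLinearMap.coe_restrictScalars', ContinuousLinearMap.smulRight_apply,
        ContinuousLinearMap.one_apply, Complex.reCLM_apply, ContinuousLinearMap.zero_apply,
        smul_eq_mul]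
      rw [hLv, ← Fz_mul_re (u := u) z v]
      have hnsq0 : Complex.normSq z ≠ 0 := by simpa [Complex.normSq_eq_zero] using hz0
      have hdiv : (v * k).re = (Fz u z * v).re - c * (z.re * v.re + z.im * v.im) / Complex.normSq z := by
        rw [hk]
        rw [show v * (Fz u z - ((c:ℝ):ℂ)/z) = Fz u z * v - ((c:ℝ):ℂ) * v / z by ring]
        rw [Complex.sub_re]
        congr 1
        rw [div_eq_mul_inv]
        simp only [Complex.mul_re, Complex.inv_re, Complex.inv_im, Complex.ofReal_re,
          Complex.ofReal_im, Complex.mul_im]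
        field_simp
        ring
      rw [hdiv]
      ring
    rw [hzero] at htot
    exact htot
  -- pull back to the half plane and use convexity
  have hχ : ∀ w ∈ H, HasFDerivAt (fun w => ψ (Complex.exp w)) (0 : ℂ →L[ℝ] ℝ) w := by
    intro w hw
    have hexp : HasFDerivAt Complex.exp
        ((ContinuousLinearMap.smulRight (1 : ℂ →L[ℂ] ℂ) (Complex.exp w)).restrictScalars ℝ) w :=
      (Complex.hasDerivAt_exp w).hasFDerivAt.restrictScalars ℝ
    have := (hψ0 _ (exp_mem_S hw)).comp w hexp
    simp at this; exact this
  have hconst : ∀ w ∈ H, ψ (Complex.exp w) = ψ (Complex.exp (-1)) := by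
    intro w hw
    apply convex_H.is_const_of_fderivWithin_eq_zero
      (fun v hv => ((hχ v hv).differentiableAt).differentiableWithinAt) _ hw neg_one_mem_H
    intro v hv
    rw [fderivWithin_of_isOpen isOpen_H hv, (hχ v hv).fderiv]
  refine ⟨fun z => h0 (Fz u) z + ((ψ (Complex.exp (-1)) : ℝ) : ℂ), c, ?_, ?_⟩
  · intro z hz
    exact (((hasDerivAt_h0 hg hz).differentiableAt).add_const _).differentiableWithinAt
  · intro z hz
    have hz0 : z ≠ 0 := (mem_S.mp hz).2
    have h1 : ψ z = ψ (Complex.exp (-1)) := by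
      have := hconst (Complex.log z) (log_mem_H hz)
      rwa [Complex.exp_log hz0] at this
    have h2 : u z - (h0 (Fz u) z).re - c * Real.log (‖z‖) = ψ (Complex.exp (-1)) := h1
    simp only [Complex.add_re, Complex.ofReal_re]
    linarith

end Final
end Stmt17


end Stmt17Aux


open Metric Complex

/-- If `u` is harmonic on the punctured unit disk `D₁ ∖ {0} ⊂ ℂ`, then
`u(z) = Re(h(z)) + c·log|z|` for some holomorphic `h` on `D₁ ∖ {0}` and real constant `c`. -/
theorem stmt17 (u : ℂ → ℝ)
    (hu : ContDiffOn ℝ 2 u (ball (0 : ℂ) 1 \ {0}))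
    (hharm : ∀ z ∈ ball (0 : ℂ) 1 \ {0},
      fderiv ℝ (fun w => fderiv ℝ u w 1) z 1
        + fderiv ℝ (fun w => fderiv ℝ u w Complex.I) z Complex.I = 0) :
    ∃ (h : ℂ → ℂ) (c : ℝ), DifferentiableOn ℂ h (ball (0 : ℂ) 1 \ {0})
      ∧ ∀ z ∈ ball (0 : ℂ) 1 \ {0}, u z = (h z).re + c * Real.log (‖z‖) := by
  exact Stmt17.main hu hharm
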